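/- Let n be a positive integer divisible by 8 and let C_1, C_2 be binary codes of length n with C_1 ⊆ C_2 ⊆ C_1^⊥, where C_1 is doubly even, contains the all-ones vector 𝟏, dim C_1 = k_1, and dim C_2 = k_1 + k_2. Let C' be a quaternary even code of length n containing 𝟏 with π(C') = C_1 and ι^{-1}(C') = C_2. Then the number of quaternary even codes C containing 𝟏 with C ⊆ C' and π(C) = ι^{-1}(C) = C_1 is exactly 2^{(k_1−1)k_2}. -/

import Mathlib

open scoped BigOperators

set_option maxHeartbeats 1000000

namespace Paper

/-- Self-orthogonality of a set of vectors w.r.t. the standard inner product. -/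
def sorth {m : ℕ} {ι : Type} [Fintype ι] (S : Set (ι → ZMod m)) : Prop :=
  ∀ x ∈ S, ∀ y ∈ S, ∑ i, x i * y i = 0

/-- The dual (as a set) of a set of vectors w.r.t. the standard inner product. -/
def dualSet {m : ℕ} {ι : Type} [Fintype ι] (S : Set (ι → ZMod m)) : Set (ι → ZMod m) :=
  {x | ∀ y ∈ S, ∑ i, x i * y i = 0}

/-- A set of vectors is doubly even if every element has Hamming weight divisible by 4. -/
def doublyEven {m : ℕ} {ι : Type} [Fintype ι] (S : Set (ι → ZMod m)) : Prop :=
  ∀ x ∈ S, 4 ∣ (Finset.univ.filter fun i => x i ≠ 0).card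

/-- Coordinatewise reduction map `(Z_{p^2})^ι → (Z_p)^ι`. -/
def res (p : ℕ) [Fact p.Prime] {ι : Type} (v : ι → ZMod (p ^ 2)) : ι → ZMod p :=
  fun i => ZMod.castHom (dvd_pow_self p (by norm_num)) (ZMod p) (v i)

/-- The injection `(Z_p)^ι → (Z_{p^2})^ι` induced by `Z_p ≅ pZ_{p^2} ⊆ Z_{p^2}`. -/
def iot (p : ℕ) {ι : Type} (v : ι → ZMod p) : ι → ZMod (p ^ 2) :=
  fun i => (p : ZMod (p ^ 2)) * (ZMod.cast (v i))

/-- Coordinatewise reduction map `(Z_4)^ι → (Z_2)^ι`. -/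
def res4 {ι : Type} (v : ι → ZMod 4) : ι → ZMod 2 :=
  fun i => ZMod.castHom (by norm_num : (2:ℕ) ∣ 4) (ZMod 2) (v i)

/-- The injection `(Z_2)^ι → (Z_4)^ι`. -/
def iot4 {ι : Type} (v : ι → ZMod 2) : ι → ZMod 4 :=
  fun i => (2 : ZMod 4) * (ZMod.cast (v i))

/-- Euclidean weight on `Z_4`. -/
def ewt (x : ZMod 4) : ℕ := if x = 0 then 0 else if x = 2 then 4 else 1

/-- A quaternary code is even if every codeword has Euclidean weight divisible by 8. -/
def evenCode {ι : Type} [Fintype ι] (S : Set (ι → ZMod 4)) : Prop :=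
  ∀ x ∈ S, 8 ∣ ∑ i, ewt (x i)

/-- The code over `Z_q` generated by the rows of an integer matrix. -/
def intRowSpan (q : ℕ) {κ ι : Type} (G : Matrix κ ι ℤ) :
    Submodule (ZMod q) (ι → ZMod q) :=
  Submodule.span (ZMod q) (Set.range fun i => fun c => ((G i c : ℤ) : ZMod q))

/-- The Gaussian binomial coefficient `[n choose k]_p`. -/
def gauss (p n k : ℕ) : ℚ :=
  ∏ i ∈ Finset.range k, ((p : ℚ) ^ n - (p : ℚ) ^ i) / ((p : ℚ) ^ k - (p : ℚ) ^ i)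

section Aux
abbrev pr2 : ZMod 4 →+* ZMod 2 := ZMod.castHom (by norm_num : (2:ℕ) ∣ 4) (ZMod 2)
lemma zadd : ∀ a b : ZMod 2, (2 * (ZMod.cast (a+b)) : ZMod 4) = 2 * ZMod.cast a + 2 * ZMod.cast b := by decide
lemma zres_iot : ∀ a : ZMod 2, pr2 (2 * ZMod.cast a) = 0 := by decide
lemma zinj : ∀ a b : ZMod 2, (2 * ZMod.cast a : ZMod 4) = 2 * ZMod.cast b → a = b := by decide
lemma ztwo : ∀ c : ZMod 4, 2 * c = 2 * ZMod.cast (pr2 c) := by decide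
lemma zsmulres : ∀ (a : ZMod 2) (c : ZMod 4), pr2 (ZMod.cast a * c) = a * pr2 c := by decide
lemma zhalf : ∀ c : ZMod 4, pr2 c = 0 → c = 2 * ZMod.cast (if c = 2 then (1:ZMod 2) else 0) := by decide
lemma zcarry : ∀ (a a' : ZMod 2) (x : ZMod 4), ZMod.cast a * x + ZMod.cast a' * x
    = ZMod.cast (a+a') * x + 2 * ZMod.cast ((a*a') * pr2 x) := by decide
lemma zcast_one : (ZMod.cast (1:ZMod 2) : ZMod 4) = 1 := by decide
lemma zcast_zero : (ZMod.cast (0:ZMod 2) : ZMod 4) = 0 := by decide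
lemma zres_one : pr2 1 = 1 := by decide
lemma zfour : ∀ c : ZMod 4, c = 0 ∨ c = 1 ∨ c = 2 ∨ c = 3 := by decide
variable {n : ℕ}
lemma res4_apply (v : Fin n → ZMod 4) (i : Fin n) : res4 v i = pr2 (v i) := rfl
lemma iot4_apply (v : Fin n → ZMod 2) (i : Fin n) : iot4 v i = 2 * ZMod.cast (v i) := rfl
def res4Hom (n : ℕ) : (Fin n → ZMod 4) →+ (Fin n → ZMod 2) where
  toFun := res4
  map_zero' := funext fun _ => map_zero pr2
  map_add' := fun x y => funext fun i => map_add pr2 (x i) (y i)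
def iot4Hom (n : ℕ) : (Fin n → ZMod 2) →+ (Fin n → ZMod 4) where
  toFun := iot4
  map_zero' := funext fun _ => by simp [iot4, zcast_zero]
  map_add' := fun x y => funext fun i => zadd (x i) (y i)
lemma iot4_add (u v : Fin n → ZMod 2) : iot4 (u + v) = iot4 u + iot4 v := map_add (iot4Hom n) u v
lemma iot4_zero : iot4 (0 : Fin n → ZMod 2) = 0 := map_zero (iot4Hom n)
lemma iot4_sub (u v : Fin n → ZMod 2) : iot4 (u - v) = iot4 u - iot4 v := map_sub (iot4Hom n) u v
lemma res4_add (u v : Fin n → ZMod 4) : res4 (u + v) = res4 u + res4 v := map_add (res4Hom n) u v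
lemma res4_sub (u v : Fin n → ZMod 4) : res4 (u - v) = res4 u - res4 v := map_sub (res4Hom n) u v
lemma res4_iot4 (u : Fin n → ZMod 2) : res4 (iot4 u) = 0 := funext fun i => zres_iot (u i)
lemma iot4_inj : Function.Injective (iot4 (ι := Fin n)) :=
  fun u v h => funext fun i => zinj (u i) (v i) (congrFun h i)
lemma res4_zero_exists (x : Fin n → ZMod 4) (h : res4 x = 0) : ∃ u, x = iot4 u :=
  ⟨fun i => if x i = 2 then 1 else 0, funext fun i => zhalf (x i) (congrFun h i)⟩
lemma two_smul_eq (x : Fin n → ZMod 4) : (2 : ZMod 4) • x = iot4 (res4 x) :=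
  funext fun i => ztwo (x i)
lemma res4_smulcast (a : ZMod 2) (x : Fin n → ZMod 4) :
    res4 ((ZMod.cast a : ZMod 4) • x) = a • res4 x :=
  funext fun i => zsmulres a (x i)
lemma res4_one : res4 (fun _ => (1 : ZMod 4) : Fin n → ZMod 4) = fun _ => (1 : ZMod 2) :=
  funext fun _ => zres_one
end Aux

/-- with `C₁ ⊆ C₂ ⊆ C₁^⊥`, `C₁` doubly even containing `𝟏`, `dim C₁ = k₁`,
`dim C₂ = k₁ + k₂`, and `C'` a quaternary even code containing `𝟏` with `π(C') = C₁`,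
`ι⁻¹(C') = C₂`, the number of quaternary even codes `C` containing `𝟏` with `C ⊆ C'` and
`π(C) = ι⁻¹(C) = C₁` is `2^{(k₁−1)k₂}`. -/
theorem stmt13 (n k1 k2 : ℕ) (hn8 : 8 ∣ n) (hn : 0 < n)
    (C1 C2 : Submodule (ZMod 2) (Fin n → ZMod 2))
    (h12 : C1 ≤ C2)
    (h2d : (C2 : Set (Fin n → ZMod 2)) ⊆ dualSet (C1 : Set (Fin n → ZMod 2)))
    (hde : doublyEven (C1 : Set (Fin n → ZMod 2)))
    (hone1 : (fun _ => (1 : ZMod 2)) ∈ C1)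
    (hdim1 : Module.finrank (ZMod 2) C1 = k1)
    (hdim2 : Module.finrank (ZMod 2) C2 = k1 + k2)
    (C' : Submodule (ZMod 4) (Fin n → ZMod 4))
    (hev' : evenCode (C' : Set (Fin n → ZMod 4)))
    (hone' : (fun _ => (1 : ZMod 4)) ∈ C')
    (hres' : res4 '' (C' : Set (Fin n → ZMod 4)) = (C1 : Set (Fin n → ZMod 2)))
    (htor' : iot4 ⁻¹' (C' : Set (Fin n → ZMod 4)) = (C2 : Set (Fin n → ZMod 2))) :
    {C : Submodule (ZMod 4) (Fin n → ZMod 4) |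
        evenCode (C : Set (Fin n → ZMod 4)) ∧ (fun _ => (1 : ZMod 4)) ∈ C ∧ C ≤ C' ∧
        res4 '' (C : Set (Fin n → ZMod 4)) = (C1 : Set (Fin n → ZMod 2)) ∧
        iot4 ⁻¹' (C : Set (Fin n → ZMod 4)) = (C1 : Set (Fin n → ZMod 2))}.ncard
      = 2 ^ ((k1 - 1) * k2) := by
  classical
  set one2 : Fin n → ZMod 2 := fun _ => 1 with hone2def
  set one4 : Fin n → ZMod 4 := fun _ => 1 with hone4def
  set e1 : C1 := ⟨one2, hone1⟩ with he1def
  have he1 : e1 ≠ 0 := by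
    intro h
    have := congrFun (congrArg Subtype.val h) ⟨0, hn⟩
    simp [he1def, hone2def] at this
  -- basis of C1 containing e1
  have li : LinearIndepOn (ZMod 2) id ({e1} : Set C1) :=
    LinearIndepOn.singleton he1
  set b : Module.Basis (li.extend (Set.subset_univ _)) (ZMod 2) C1 := Module.Basis.extend li with hbdef
  set j1 : li.extend (Set.subset_univ _) := ⟨e1, li.subset_extend _ rfl⟩ with hj1def
  have hbj : ∀ j, b j = (j : C1) := fun j => Module.Basis.extend_apply_self li j
  -- lifts of C1 elements into C'
  have hlift : ∀ v : C1, ∃ x, x ∈ C' ∧ res4 x = (v : Fin n → ZMod 2) := by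
    intro v
    have hv : (v : Fin n → ZMod 2) ∈ res4 '' (C' : Set (Fin n → ZMod 4)) := by
      rw [hres']; exact v.2
    rcases hv with ⟨x, hx, hxe⟩
    exact ⟨x, hx, hxe⟩
  choose ℓ hℓC hℓres using hlift
  -- lifts of basis vectors, with `one` lifted to `one`
  set L : li.extend (Set.subset_univ _) → (Fin n → ZMod 4) :=
    fun j => if (j : C1) = e1 then one4 else ℓ (j : C1) with hLdef
  have hLC : ∀ j, L j ∈ C' := by
    intro j
    by_cases h : (j : C1) = e1
    · simp only [hLdef, if_pos h]; exact hone'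
    · simp only [hLdef, if_neg h]; exact hℓC _
  have hLres : ∀ j, res4 (L j) = ((j : C1) : Fin n → ZMod 2) := by
    intro j
    by_cases h : (j : C1) = e1
    · simp only [hLdef, if_pos h, h]; exact res4_one
    · simp only [hLdef, if_neg h]; exact hℓres _
  have hLj1 : L j1 = one4 := by simp [hLdef, hj1def]
  -- the reference lift σ
  set σ : C1 → (Fin n → ZMod 4) :=
    fun v => ∑ j ∈ (b.repr v).support, (ZMod.cast (b.repr v j) : ZMod 4) • L j with hσdef
  have hσeq : ∀ (v : C1) (s : Finset (li.extend (Set.subset_univ _))),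
      (b.repr v).support ⊆ s → σ v = ∑ j ∈ s, (ZMod.cast (b.repr v j) : ZMod 4) • L j := by
    intro v s hs
    simp only [hσdef]
    exact Finset.sum_subset hs fun j _ hj => by
      rw [Finsupp.notMem_support_iff.mp hj, zcast_zero, zero_smul]
  have hσmem : ∀ v, σ v ∈ C' := by
    intro v
    rw [hσeq v _ (le_refl _)]
    exact Submodule.sum_mem _ fun j _ => Submodule.smul_mem _ _ (hLC j)
  have hσ0 : σ 0 = 0 := by
    simp only [hσdef, map_zero]
    simp
  have hσres : ∀ v, res4 (σ v) = (v : Fin n → ZMod 2) := by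
    intro v
    have h := b.linearCombination_repr v
    rw [Finsupp.linearCombination_apply, Finsupp.sum] at h
    have h2 : res4 (σ v) = ∑ j ∈ (b.repr v).support,
        (b.repr v j) • (((j : C1)) : Fin n → ZMod 2) := by
      show res4Hom n (σ v) = _
      rw [hσeq v _ (le_refl _), map_sum]
      refine Finset.sum_congr rfl fun j _ => ?_
      show res4 ((ZMod.cast (b.repr v j) : ZMod 4) • L j) = _
      rw [res4_smulcast, hLres]
    have h3 : ((∑ a ∈ (b.repr v).support, (b.repr v) a • b a : C1) : Fin n → ZMod 2)
        = ∑ j ∈ (b.repr v).support, (b.repr v j) • (((j : C1)) : Fin n → ZMod 2) := by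
      push_cast
      exact Finset.sum_congr rfl fun j _ => by rw [hbj]
    rw [h2, ← h3, h]
  have hrepr1 : b.repr e1 = Finsupp.single j1 1 := by
    have h := b.repr_self j1
    rwa [hbj j1] at h
  have hσ1 : σ e1 = one4 := by
    have hrepr := hrepr1
    have hsupp : (b.repr e1).support = {j1} := by
      rw [hrepr]
      exact Finsupp.support_single_ne_zero _ one_ne_zero
    have := hσeq e1 {j1} (by rw [hsupp])
    rw [this, Finset.sum_singleton, hrepr, Finsupp.single_eq_same, zcast_one, one_smul, hLj1]
  have hσcarry : ∀ v w : C1, ∃ c, c ∈ C1 ∧ σ v + σ w = σ (v + w) + iot4 c := by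
    intro v w
    set g := b.repr v with hg
    set g' := b.repr w with hg'
    set s := g.support ∪ g'.support with hs
    have hgs : g.support ⊆ s := Finset.subset_union_left
    have hg's : g'.support ⊆ s := Finset.subset_union_right
    have hsum : b.repr (v + w) = g + g' := by rw [map_add]
    have hadds : (b.repr (v + w)).support ⊆ s := by
      rw [hsum]
      exact Finsupp.support_add.trans (by rw [hs])
    refine ⟨∑ j ∈ s, (g j * g' j) • (((j : C1)) : Fin n → ZMod 2), ?_, ?_⟩
    · exact Submodule.sum_mem _ fun j _ => Submodule.smul_mem _ _ (j : C1).2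
    · rw [hσeq v s hgs, hσeq w s hg's, hσeq (v + w) s hadds]
      have hiot : iot4 (∑ j ∈ s, (g j * g' j) • (((j : C1)) : Fin n → ZMod 2))
          = ∑ j ∈ s, iot4 ((g j * g' j) • (((j : C1)) : Fin n → ZMod 2)) :=
        map_sum (iot4Hom n) _ _
      rw [hiot, ← Finset.sum_add_distrib, ← Finset.sum_add_distrib]
      refine Finset.sum_congr rfl fun j _ => ?_
      funext i
      have hres : pr2 (L j i) = ((j : C1) : Fin n → ZMod 2) i := by
        rw [← res4_apply, hLres]
      show ZMod.cast (g j) * L j i + ZMod.cast (g' j) * L j i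
          = ZMod.cast (b.repr (v + w) j) * L j i
            + 2 * ZMod.cast (((g j * g' j) • (((j : C1)) : Fin n → ZMod 2)) i)
      rw [hsum]
      have hz := zcarry (g j) (g' j) (L j i)
      rw [hres] at hz
      rw [Finsupp.add_apply, hz]
      rfl
  -- quotient module Q = C2 / C1
  set N : Submodule (ZMod 2) C2 := C1.comap C2.subtype with hNdef
  set mkq : C2 →ₗ[ZMod 2] (C2 ⧸ N) := N.mkQ with hmkqdef
  have hmk0 : ∀ u : C2, mkq u = 0 ↔ (u : Fin n → ZMod 2) ∈ C1 := by
    intro u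
    rw [hmkqdef, Submodule.mkQ_apply, Submodule.Quotient.mk_eq_zero, hNdef]
    exact Submodule.mem_comap
  have hC'2 : ∀ u : Fin n → ZMod 2, u ∈ C2 → iot4 u ∈ C' := by
    intro u hu
    have hu' : u ∈ (C2 : Set (Fin n → ZMod 2)) := hu
    rw [← htor'] at hu'
    exact hu'
  -- the set being counted
  set SSet : Set (Submodule (ZMod 4) (Fin n → ZMod 4)) :=
    {C : Submodule (ZMod 4) (Fin n → ZMod 4) |
        evenCode (C : Set (Fin n → ZMod 4)) ∧ one4 ∈ C ∧ C ≤ C' ∧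
        res4 '' (C : Set (Fin n → ZMod 4)) = (C1 : Set (Fin n → ZMod 2)) ∧
        iot4 ⁻¹' (C : Set (Fin n → ZMod 4)) = (C1 : Set (Fin n → ZMod 2))} with hSdef
  -- construction of the code attached to a linear map φ with φ e1 = 0
  have key : ∀ φ : C1 →ₗ[ZMod 2] (C2 ⧸ N), φ e1 = 0 →
      ∃ C : Submodule (ZMod 4) (Fin n → ZMod 4),
        (∀ x, x ∈ C ↔ ∃ (v : C1) (u : C2),
          x = σ v + iot4 u ∧ mkq u = φ v) ∧ C ∈ SSet := by
    intro φ hφ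
    set c : Set (Fin n → ZMod 4) :=
      {x | ∃ (v : C1) (u : C2), x = σ v + iot4 u ∧ mkq u = φ v} with hcdef
    have hzero : (0 : Fin n → ZMod 4) ∈ c := by
      refine ⟨0, 0, ?_, ?_⟩
      · rw [hσ0]; rw [show ((0 : C2) : Fin n → ZMod 2) = 0 from rfl, iot4_zero]; rw [add_zero]
      · rw [map_zero, map_zero]
    have hadd : ∀ x y, x ∈ c → y ∈ c → x + y ∈ c := by
      rintro x y ⟨v, u, rfl, hm⟩ ⟨v', u', rfl, hm'⟩
      obtain ⟨d, hd1, hd2⟩ := hσcarry v v'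
      refine ⟨v + v', u + u' + ⟨d, h12 hd1⟩, ?_, ?_⟩
      · have : ((u + u' + ⟨d, h12 hd1⟩ : C2) : Fin n → ZMod 2)
            = (u : Fin n → ZMod 2) + u' + d := rfl
        have hd3 : σ (v + v') = σ v + σ v' - iot4 d := by rw [hd2]; abel
        rw [this, iot4_add, iot4_add, hd3]
        abel
      · rw [map_add, map_add, hm, hm', map_add]
        have : mkq ⟨d, h12 hd1⟩ = 0 := (hmk0 _).mpr hd1
        rw [this, add_zero]
    have htwo : ∀ x, x ∈ c → (2 : ZMod 4) • x ∈ c := by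
      rintro x ⟨v, u, rfl, hm⟩
      have hr : res4 (σ v + iot4 u) = (v : Fin n → ZMod 2) := by
        rw [res4_add, hσres, res4_iot4, add_zero]
      refine ⟨0, ⟨(v : Fin n → ZMod 2), h12 v.2⟩, ?_, ?_⟩
      · rw [two_smul_eq, hr, hσ0, zero_add]
      · rw [map_zero]
        exact (hmk0 _).mpr v.2
    set C : Submodule (ZMod 4) (Fin n → ZMod 4) :=
      { carrier := c
        add_mem' := fun hx hy => hadd _ _ hx hy
        zero_mem' := hzero
        smul_mem' := by
          intro r x hx
          rcases zfour r with h | h | h | h <;> subst h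
          · rw [zero_smul]; exact hzero
          · rw [one_smul]; exact hx
          · exact htwo _ hx
          · have : (3 : ZMod 4) • x = x + (2 : ZMod 4) • x := by
              rw [two_smul_eq]
              funext i
              show 3 * x i = x i + _
              rw [← two_smul_eq]
              show 3 * x i = x i + 2 * x i
              ring
            rw [this]
            exact hadd _ _ hx (htwo _ hx) } with hCdef
    have hmemC : ∀ x, x ∈ C ↔ x ∈ c := fun x => Iff.rfl
    have hle : C ≤ C' := by
      rintro x ⟨v, u, rfl, hm⟩
      exact Submodule.add_mem _ (hσmem v) (hC'2 _ u.2)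
    refine ⟨C, fun x => hmemC x, ?_, ?_, hle, ?_, ?_⟩
    · exact fun x hx => hev' x (hle hx)
    · refine ⟨e1, 0, ?_, ?_⟩
      · rw [hσ1, show ((0 : C2) : Fin n → ZMod 2) = 0 from rfl, iot4_zero, add_zero]
      · rw [map_zero, hφ]
    · apply Set.Subset.antisymm
      · rintro z ⟨x, ⟨v, u, rfl, hm⟩, rfl⟩
        have : res4 (σ v + iot4 u) = (v : Fin n → ZMod 2) := by
          rw [res4_add, hσres, res4_iot4, add_zero]
        rw [this]
        exact v.2
      · intro z hz
        obtain ⟨u, hu⟩ := Submodule.mkQ_surjective N (φ ⟨z, hz⟩)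
        refine ⟨σ ⟨z, hz⟩ + iot4 u, ⟨⟨z, hz⟩, u, rfl, hu⟩, ?_⟩
        rw [res4_add, hσres, res4_iot4, add_zero]
    · apply Set.Subset.antisymm
      · rintro z hz
        obtain ⟨v, u, heq, hm⟩ := hz
        have hres0 : res4 (iot4 z) = 0 := res4_iot4 z
        rw [heq, res4_add, hσres, res4_iot4, add_zero] at hres0
        have hv0 : v = 0 := Subtype.ext hres0
        rw [hv0, hσ0, zero_add] at heq
        have hz2 : z = (u : Fin n → ZMod 2) := iot4_inj heq
        rw [hv0, map_zero] at hm
        rw [hz2]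
        exact (hmk0 u).mp hm
      · intro z hz
        refine ⟨0, ⟨z, h12 hz⟩, ?_, ?_⟩
        · rw [hσ0, zero_add]
        · rw [map_zero]; exact (hmk0 _).mpr hz
  choose G hGmem hGS using key
  set T' : Type := {φ : C1 →ₗ[ZMod 2] (C2 ⧸ N) // φ e1 = 0} with hT'def
  set F : T' → SSet := fun t => ⟨G t.1 t.2, hGS t.1 t.2⟩ with hFdef
  have hresmem : ∀ (v : C1) (u : C2), res4 (σ v + iot4 u) = (v : Fin n → ZMod 2) := by
    intro v u
    rw [res4_add, hσres, res4_iot4, add_zero]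
  have hFinj : Function.Injective F := by
    intro t t' h
    have hGeq : G t.1 t.2 = G t'.1 t'.2 := congrArg Subtype.val h
    apply Subtype.ext
    apply LinearMap.ext
    intro v
    obtain ⟨u, hu⟩ := Submodule.mkQ_surjective N (t.1 v)
    have hu' : mkq u = t.1 v := hu
    have hx : σ v + iot4 u ∈ G t.1 t.2 := (hGmem t.1 t.2 _).mpr ⟨v, u, rfl, hu'⟩
    rw [hGeq] at hx
    obtain ⟨v', u', heq, hm'⟩ := (hGmem t'.1 t'.2 _).mp hx
    have hv : v = v' := by
      apply Subtype.ext
      have h1 := congrArg res4 heq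
      rw [hresmem, hresmem] at h1
      exact h1
    subst hv
    have h2 : iot4 (u : Fin n → ZMod 2) = iot4 (u' : Fin n → ZMod 2) := add_left_cancel heq
    have h3 : u = u' := Subtype.ext (iot4_inj h2)
    rw [← hu', h3]
    exact hm'
  have hFsurj : Function.Surjective F := by
    rintro ⟨C, hC⟩
    obtain ⟨hev, honeC, hle, hres, htor⟩ := hC
    have hiotC : ∀ z, z ∈ C1 → iot4 z ∈ C := by
      intro z hz
      have h2 : z ∈ iot4 ⁻¹' (C : Set (Fin n → ZMod 4)) := by rw [htor]; exact hz
      exact h2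
    have hliftC : ∀ v : C1, ∃ x, x ∈ C ∧ res4 x = (v : Fin n → ZMod 2) := by
      intro v
      have : (v : Fin n → ZMod 2) ∈ res4 '' (C : Set (Fin n → ZMod 4)) := by
        rw [hres]; exact v.2
      rcases this with ⟨x, hx, hxe⟩
      exact ⟨x, hx, hxe⟩
    choose xc hxcC hxcres using hliftC
    have hdiff : ∀ x y, x ∈ C → y ∈ C → res4 x = res4 y → ∃ d, d ∈ C1 ∧ x = y + iot4 d := by
      intro x y hx hy hxy
      have hsub : x - y ∈ C := Submodule.sub_mem _ hx hy
      have h0 : res4 (x - y) = 0 := by rw [res4_sub, hxy, sub_self]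
      obtain ⟨d, hd⟩ := res4_zero_exists _ h0
      have hdC1 : d ∈ C1 := by
        have h1 : iot4 d ∈ C := hd ▸ hsub
        have h2 : d ∈ iot4 ⁻¹' (C : Set (Fin n → ZMod 4)) := h1
        rw [htor] at h2
        exact h2
      refine ⟨d, hdC1, ?_⟩
      rw [← hd]
      abel
    have hwex : ∀ v : C1, ∃ u : C2, iot4 (u : Fin n → ZMod 2) = xc v - σ v := by
      intro v
      have h0 : res4 (xc v - σ v) = 0 := by rw [res4_sub, hxcres, hσres, sub_self]
      obtain ⟨u0, hu0⟩ := res4_zero_exists _ h0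
      have hu0C2 : u0 ∈ C2 := by
        have h1 : iot4 u0 ∈ C' := by
          rw [← hu0]
          exact Submodule.sub_mem _ (hle (hxcC v)) (hσmem v)
        have h2 : u0 ∈ iot4 ⁻¹' (C' : Set (Fin n → ZMod 4)) := h1
        rw [htor'] at h2
        exact h2
      exact ⟨⟨u0, hu0C2⟩, hu0.symm⟩
    choose w hw using hwex
    have hws : ∀ v, σ v + iot4 ((w v : C2) : Fin n → ZMod 2) = xc v := by
      intro v
      rw [hw]
      abel
    set φ0 : C1 → (C2 ⧸ N) := fun v => mkq (w v) with hφ0def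
    have hadd0 : ∀ v v', φ0 (v + v') = φ0 v + φ0 v' := by
      intro v v'
      obtain ⟨c₁, hc₁, hcarry⟩ := hσcarry v v'
      have hres2 : res4 (xc (v + v')) = res4 (xc v + xc v') := by
        rw [res4_add, hxcres, hxcres, hxcres]
        rfl
      obtain ⟨c₂, hc₂, hxceq⟩ := hdiff _ _ (hxcC (v + v')) (Submodule.add_mem _ (hxcC v) (hxcC v')) hres2
      have hsuf : mkq (w (v + v') - w v - w v') = 0 := by
        rw [hmk0]
        have hval : ((w (v + v') - w v - w v' : C2) : Fin n → ZMod 2)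
            = ((w (v + v') : C2) : Fin n → ZMod 2) - ((w v : C2) : Fin n → ZMod 2)
              - ((w v' : C2) : Fin n → ZMod 2) := rfl
        rw [hval]
        have hι : iot4 (((w (v + v') : C2) : Fin n → ZMod 2) - ((w v : C2) : Fin n → ZMod 2)
              - ((w v' : C2) : Fin n → ZMod 2)) = iot4 (c₂ + c₁) := by
          rw [iot4_sub, iot4_sub, iot4_add, hw, hw, hw, hxceq]
          have hσ2 : σ (v + v') = σ v + σ v' - iot4 c₁ := by rw [hcarry]; abel
          rw [hσ2]
          abel
        rw [iot4_inj hι]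
        exact C1.add_mem hc₂ hc₁
      rw [map_sub, map_sub, sub_sub, sub_eq_zero] at hsuf
      exact hsuf
    have hzero0 : φ0 0 = 0 := by
      have h1 := hadd0 0 0
      rw [add_zero] at h1
      exact (left_eq_add.mp h1)
    have htwo2 : ∀ a : ZMod 2, a = 0 ∨ a = 1 := by decide
    set φ : C1 →ₗ[ZMod 2] (C2 ⧸ N) :=
      { toFun := φ0
        map_add' := hadd0
        map_smul' := by
          intro a v
          rcases htwo2 a with h | h <;> subst h
          · rw [zero_smul]
            show φ0 0 = (0 : ZMod 2) • φ0 v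
            rw [hzero0, zero_smul]
          · rw [one_smul]
            show φ0 v = (1 : ZMod 2) • φ0 v
            rw [one_smul] } with hφdef
    have hres14 : res4 (xc e1) = res4 one4 := by
      rw [hxcres]
      exact (funext fun i => (zres_one).symm : (e1 : Fin n → ZMod 2) = res4 one4)
    have hφe1 : φ e1 = 0 := by
      obtain ⟨d, hd, hxeq⟩ := hdiff (xc e1) one4 (hxcC e1) honeC hres14
      show φ0 e1 = 0
      rw [hφ0def]
      rw [hmk0]
      have hι : iot4 ((w e1 : C2) : Fin n → ZMod 2) = iot4 d := by
        rw [hw, hxeq, hσ1]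
        abel
      rw [iot4_inj hι]
      exact hd
    refine ⟨⟨φ, hφe1⟩, ?_⟩
    apply Subtype.ext
    show G φ hφe1 = C
    apply le_antisymm
    · intro x hx
      obtain ⟨v, u, rfl, hm⟩ := (hGmem φ hφe1 x).mp hx
      have hmm : mkq (u - w v) = 0 := by
        rw [map_sub, hm]
        show φ0 v - mkq (w v) = 0
        rw [hφ0def]
        exact sub_self _
      have hdva : ((u - w v : C2) : Fin n → ZMod 2) ∈ C1 := (hmk0 _).mp hmm
      have heq2 : σ v + iot4 (u : Fin n → ZMod 2)
          = xc v + iot4 (((u - w v : C2)) : Fin n → ZMod 2) := by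
        rw [show ((u - w v : C2) : Fin n → ZMod 2)
            = (u : Fin n → ZMod 2) - ((w v : C2) : Fin n → ZMod 2) from rfl,
          iot4_sub, ← hws v]
        abel
      rw [heq2]
      exact Submodule.add_mem _ (hxcC v) (hiotC _ hdva)
    · intro x hx
      have hrx : res4 x ∈ C1 := by
        have h1 : res4 x ∈ res4 '' (C : Set (Fin n → ZMod 4)) := ⟨x, hx, rfl⟩
        rw [hres] at h1
        exact h1
      obtain ⟨d, hd, hxd⟩ := hdiff x (xc ⟨res4 x, hrx⟩) hx (hxcC _) (by rw [hxcres])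
      rw [hGmem]
      refine ⟨⟨res4 x, hrx⟩, w ⟨res4 x, hrx⟩ + ⟨d, h12 hd⟩, ?_, ?_⟩
      · rw [show ((w ⟨res4 x, hrx⟩ + ⟨d, h12 hd⟩ : C2) : Fin n → ZMod 2)
            = ((w ⟨res4 x, hrx⟩ : C2) : Fin n → ZMod 2) + d from rfl,
          iot4_add, ← add_assoc, hws, ← hxd]
      · rw [map_add, (hmk0 ⟨d, h12 hd⟩).mpr hd, add_zero]
        rfl
  -- counting
  haveI finC1 : Finite C1 := Subtype.finite
  haveI finC2 : Finite C2 := Subtype.finite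
  haveI finQ : Finite (C2 ⧸ N) := Quotient.finite _
  haveI finH : Finite (C1 →ₗ[ZMod 2] (C2 ⧸ N)) :=
    Finite.of_injective (fun f => (f : C1 → C2 ⧸ N)) DFunLike.coe_injective
  set ev : (C1 →ₗ[ZMod 2] (C2 ⧸ N)) →ₗ[ZMod 2] (C2 ⧸ N) :=
    { toFun := fun φ => φ e1
      map_add' := fun _ _ => rfl
      map_smul' := fun _ _ => rfl } with hevdef
  have hcard1 : Nat.card T' = Nat.card (LinearMap.ker ev) := by
    apply Nat.card_congr
    exact Equiv.subtypeEquivRight fun φ => (LinearMap.mem_ker (f := ev)).symm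
  have hNrank : Module.finrank (ZMod 2) N = k1 := by
    rw [← hdim1]
    exact LinearEquiv.finrank_eq (Submodule.comapSubtypeEquivOfLe h12)
  have hQrank : Module.finrank (ZMod 2) (C2 ⧸ N) = k2 := by
    have h1 := Submodule.finrank_quotient_add_finrank N
    rw [hdim2, hNrank] at h1
    omega
  have hHrank : Module.finrank (ZMod 2) (C1 →ₗ[ZMod 2] (C2 ⧸ N)) = k1 * k2 := by
    rw [Module.finrank_linearMap, hdim1, hQrank]
  have hevsurj : Function.Surjective ev := by
    intro q
    refine ⟨LinearMap.smulRight (b.coord j1) q, ?_⟩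
    show (b.coord j1 e1) • q = q
    have h1 : b.coord j1 e1 = 1 := by
      rw [Module.Basis.coord_apply, hrepr1, Finsupp.single_eq_same]
    rw [h1, one_smul]
  have hkerrank : Module.finrank (ZMod 2) (LinearMap.ker ev) = k1 * k2 - k2 := by
    have h1 := LinearMap.finrank_range_add_finrank_ker ev
    rw [hHrank] at h1
    have h2 : LinearMap.range ev = ⊤ := LinearMap.range_eq_top.mpr hevsurj
    rw [h2, finrank_top, hQrank] at h1
    omega
  have hcard2 : Nat.card (LinearMap.ker ev) = 2 ^ (k1 * k2 - k2) := by
    haveI : Fintype (LinearMap.ker ev) := Fintype.ofFinite _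
    rw [Nat.card_eq_fintype_card,
      Module.card_eq_pow_finrank (K := ZMod 2) (V := LinearMap.ker ev), ZMod.card, hkerrank]
  have hfinal : SSet.ncard = 2 ^ (k1 * k2 - k2) := by
    rw [← Nat.card_coe_set_eq, ← Nat.card_eq_of_bijective F ⟨hFinj, hFsurj⟩, hcard1, hcard2]
  rw [hfinal]
  congr 1
  rw [Nat.sub_mul, one_mul]


end Paper
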